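/- Maassen–Uffink uncertainty relation: let A = {|a_k⟩} and B = {|b_l⟩} be two orthonormal bases of a d-dimensional Hilbert space that are mutually unbiased (|⟨a_k|b_l⟩| = 1/√d for all k, l). Then for every unit vector |ψ⟩, the sum of the Shannon entropies of the outcome distributions satisfies H(p_A) + H(p_B) ≥ log d, where p_A(k) = |⟨a_k|ψ⟩|² and p_B(l) = |⟨b_l|ψ⟩|². -/

import Mathlib

open scoped InnerProductSpace
open Finset

namespace MU

variable {d : ℕ} {H : Type*} [NormedAddCommGroup H] [InnerProductSpace ℂ H]

noncomputable def diagOp (c : OrthonormalBasis (Fin d) ℂ H) (f : Fin d → ℝ) : H →ₗ[ℂ] H where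
  toFun v := ∑ k, ((f k : ℂ) * ⟪c k, v⟫_ℂ) • c k
  map_add' x y := by
    simp [inner_add_right, mul_add, add_smul, Finset.sum_add_distrib]
  map_smul' m x := by
    simp only [inner_smul_right, RingHom.id_apply, Finset.smul_sum, smul_smul]
    exact Finset.sum_congr rfl fun k _ => by rw [mul_left_comm]

lemma diagOp_apply (c : OrthonormalBasis (Fin d) ℂ H) (f : Fin d → ℝ) (v : H) :
    diagOp c f v = ∑ k, ((f k : ℂ) * ⟪c k, v⟫_ℂ) • c k := rfl

lemma inner_diagOp_self (c : OrthonormalBasis (Fin d) ℂ H) (f : Fin d → ℝ) (v : H) :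
    ⟪v, diagOp c f v⟫_ℂ = ((∑ k, f k * ‖⟪c k, v⟫_ℂ‖ ^ 2 : ℝ) : ℂ) := by
  rw [diagOp_apply, inner_sum]
  push_cast
  refine Finset.sum_congr rfl fun k _ => ?_
  rw [inner_smul_right, ← inner_conj_symm (c k) v, mul_assoc, Complex.conj_mul',
    RCLike.norm_conj]

lemma re_inner_diagOp_self (c : OrthonormalBasis (Fin d) ℂ H) (f : Fin d → ℝ) (v : H) :
    (⟪v, diagOp c f v⟫_ℂ).re = ∑ k, f k * ‖⟪c k, v⟫_ℂ‖ ^ 2 := by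
  rw [inner_diagOp_self]; exact Complex.ofReal_re _

lemma diagOp_basis (c : OrthonormalBasis (Fin d) ℂ H) (f : Fin d → ℝ) (j : Fin d) :
    diagOp c f (c j) = ((f j : ℂ)) • c j := by
  rw [diagOp_apply, Finset.sum_eq_single j]
  · rw [orthonormal_iff_ite.mp c.orthonormal j j]; simp
  · intro k _ hk
    rw [orthonormal_iff_ite.mp c.orthonormal k j]
    simp [hk]
  · simp

lemma diagOp_symmetric (c : OrthonormalBasis (Fin d) ℂ H) (f : Fin d → ℝ) :
    (diagOp c f).IsSymmetric := by
  intro x y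
  rw [diagOp_apply, diagOp_apply, sum_inner, inner_sum]
  refine Finset.sum_congr rfl fun k _ => ?_
  rw [inner_smul_left, inner_smul_right, ← inner_conj_symm x (c k)]
  simp only [map_mul, Complex.conj_ofReal]
  ring

lemma diagOp_comp (c : OrthonormalBasis (Fin d) ℂ H) (f g : Fin d → ℝ) (v : H) :
    diagOp c f (diagOp c g v) = diagOp c (fun k => f k * g k) v := by
  rw [diagOp_apply c g, map_sum, diagOp_apply]
  refine Finset.sum_congr rfl fun k _ => ?_
  rw [map_smul, diagOp_basis, smul_smul]
  push_cast
  ring_nf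
variable [FiniteDimensional ℂ H]

/-- Spectral expansion of the real quadratic form of a symmetric map. -/
lemma re_inner_eigen {T : H →ₗ[ℂ] H} (hT : T.IsSymmetric) (v : H) :
    (⟪v, T v⟫_ℂ).re =
      ∑ i, hT.eigenvalues rfl i * ‖⟪hT.eigenvectorBasis rfl i, v⟫_ℂ‖ ^ 2 := by
  set e := hT.eigenvectorBasis (n := Module.finrank ℂ H) rfl
  set μ := hT.eigenvalues (n := Module.finrank ℂ H) rfl
  have hv : v = ∑ i, ⟪e i, v⟫_ℂ • e i := by
    conv_lhs => rw [← e.sum_repr v]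
    exact Finset.sum_congr rfl fun i _ => by rw [e.repr_apply_apply]
  have hTv : T v = ∑ i, ⟪e i, v⟫_ℂ • ((μ i : ℂ) • e i) := by
    conv_lhs => rw [hv, map_sum]
    exact Finset.sum_congr rfl fun i _ => by
      rw [map_smul, hT.apply_eigenvectorBasis]; rfl
  have : ⟪v, T v⟫_ℂ = ((∑ i, μ i * ‖⟪e i, v⟫_ℂ‖ ^ 2 : ℝ) : ℂ) := by
    rw [hTv, inner_sum]
    push_cast
    refine Finset.sum_congr rfl fun i _ => ?_
    rw [inner_smul_right, inner_smul_right, ← inner_conj_symm (e i) v,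
      mul_left_comm, Complex.conj_mul', RCLike.norm_conj]
  rw [this, Complex.ofReal_re]

/-- A symmetric PSD map with vanishing quadratic form at `v` kills `v`. -/
lemma psd_apply_eq_zero {T : H →ₗ[ℂ] H} (hT : T.IsSymmetric)
    (hpos : ∀ w, 0 ≤ (⟪w, T w⟫_ℂ).re) {v : H} (hv : (⟪v, T v⟫_ℂ).re = 0) :
    T v = 0 := by
  set e := hT.eigenvectorBasis (n := Module.finrank ℂ H) rfl
  set μ := hT.eigenvalues (n := Module.finrank ℂ H) rfl
  have hμ : ∀ i, 0 ≤ μ i := by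
    intro i
    have h0 := hpos (e i)
    rw [re_inner_eigen hT (e i)] at h0
    have hsum : ∑ j, μ j * ‖⟪e j, e i⟫_ℂ‖ ^ 2 = μ i := by
      rw [Finset.sum_eq_single i]
      · rw [orthonormal_iff_ite.mp e.orthonormal i i]; simp
      · intro j _ hj
        rw [orthonormal_iff_ite.mp e.orthonormal j i]; simp [hj]
      · simp
    rwa [hsum] at h0
  rw [re_inner_eigen hT v] at hv
  have hterm : ∀ i ∈ Finset.univ (α := Fin (Module.finrank ℂ H)),
      μ i * ‖⟪e i, v⟫_ℂ‖ ^ 2 = 0 := by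
    refine (Finset.sum_eq_zero_iff_of_nonneg fun i _ => ?_).mp hv
    exact mul_nonneg (hμ i) (by positivity)
  have hv' : v = ∑ i, ⟪e i, v⟫_ℂ • e i := by
    conv_lhs => rw [← e.sum_repr v]
    exact Finset.sum_congr rfl fun i _ => by rw [e.repr_apply_apply]
  rw [hv', map_sum]
  refine Finset.sum_eq_zero fun i _ => ?_
  rw [map_smul, hT.apply_eigenvectorBasis]
  have := hterm i (Finset.mem_univ i)
  rcases mul_eq_zero.mp this with h | h
  · simp [μ] at h ⊢
    rw [h]; simp
  · have : ⟪e i, v⟫_ℂ = 0 := by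
      have : ‖⟪e i, v⟫_ℂ‖ = 0 := by
        have := sq_eq_zero_iff.mp h; simpa using this
      simpa using this
    rw [this]; simp

/-- Operator monotonicity of the square root, quadratic-form version. -/
lemma sqrt_mono {P Q : H →ₗ[ℂ] H} (hP : P.IsSymmetric) (hQ : Q.IsSymmetric)
    (hPpos : ∀ v, 0 ≤ (⟪v, P v⟫_ℂ).re) (hQpos : ∀ v, 0 ≤ (⟪v, Q v⟫_ℂ).re)
    (hPQ : ∀ v, (⟪v, P (P v)⟫_ℂ).re ≤ (⟪v, Q (Q v)⟫_ℂ).re) (v : H) :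
    (⟪v, P v⟫_ℂ).re ≤ (⟪v, Q v⟫_ℂ).re := by
  set D := Q - P with hDdef
  have hD : D.IsSymmetric := hQ.sub hP
  set e := hD.eigenvectorBasis (n := Module.finrank ℂ H) rfl
  set μ := hD.eigenvalues (n := Module.finrank ℂ H) rfl
  have key : ∀ i, 0 ≤ μ i := by
    intro i
    by_contra hneg
    push_neg at hneg
    set w := e i with hw
    have hDw : D w = (μ i : ℂ) • w := hD.apply_eigenvectorBasis rfl i
    -- Q Q - P P = Q D + D P applied at w
    have hid : Q (Q w) - P (P w) = Q (D w) + D (P w) := by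
      simp only [hDdef, LinearMap.sub_apply, map_sub]
      abel
    have h1 : (⟪w, Q (D w)⟫_ℂ).re = μ i * (⟪w, Q w⟫_ℂ).re := by
      rw [hDw, map_smul, inner_smul_right]
      simp [Complex.re_ofReal_mul]
    have h2 : (⟪w, D (P w)⟫_ℂ).re = μ i * (⟪w, P w⟫_ℂ).re := by
      rw [← hD w (P w), hDw, inner_smul_left, Complex.conj_ofReal]
      simp [Complex.re_ofReal_mul]
    have h3 : 0 ≤ (⟪w, Q (Q w)⟫_ℂ).re - (⟪w, P (P w)⟫_ℂ).re := by
      have := hPQ w; linarith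
    have h4 : (⟪w, Q (Q w)⟫_ℂ).re - (⟪w, P (P w)⟫_ℂ).re
        = μ i * ((⟪w, Q w⟫_ℂ).re + (⟪w, P w⟫_ℂ).re) := by
      have : ⟪w, Q (Q w)⟫_ℂ - ⟪w, P (P w)⟫_ℂ = ⟪w, Q (D w)⟫_ℂ + ⟪w, D (P w)⟫_ℂ := by
        rw [← inner_sub_right, ← inner_add_right, hid]
      have hre := congrArg Complex.re this
      simp only [Complex.sub_re, Complex.add_re] at hre
      rw [hre, h1, h2]; ring
    have hsumpos : (⟪w, Q w⟫_ℂ).re + (⟪w, P w⟫_ℂ).re ≤ 0 := by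
      nlinarith [hQpos w, hPpos w]
    have hQw0 : (⟪w, Q w⟫_ℂ).re = 0 := by nlinarith [hQpos w, hPpos w]
    have hPw0 : (⟪w, P w⟫_ℂ).re = 0 := by nlinarith [hQpos w, hPpos w]
    have hQz := psd_apply_eq_zero hQ hQpos hQw0
    have hPz := psd_apply_eq_zero hP hPpos hPw0
    have hDz : D w = 0 := by
      rw [hDdef, LinearMap.sub_apply, hQz, hPz, sub_zero]
    rw [hDw] at hDz
    have hw1 : ‖w‖ = 1 := e.orthonormal.1 i
    have : (μ i : ℂ) = 0 := by
      by_contra hne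
      have := smul_eq_zero.mp hDz
      rcases this with h | h
      · exact hne h
      · rw [h] at hw1; simp at hw1
    have : μ i = 0 := by exact_mod_cast this
    linarith
  have hre := re_inner_eigen hD v
  have : 0 ≤ (⟪v, D v⟫_ℂ).re := by
    rw [hre]
    exact Finset.sum_nonneg fun i _ => mul_nonneg (key i) (by positivity)
  have hsub : ⟪v, D v⟫_ℂ = ⟪v, Q v⟫_ℂ - ⟪v, P v⟫_ℂ := by
    rw [hDdef, LinearMap.sub_apply, inner_sub_right]
  rw [hsub] at this
  simp only [Complex.sub_re] at this
  linarith
set_option linter.unusedSectionVars false in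
lemma parseval (c : OrthonormalBasis (Fin d) ℂ H) (ψ : H) (hψ : ‖ψ‖ = 1) :
    ∑ k, ‖⟪c k, ψ⟫_ℂ‖ ^ 2 = 1 := by
  have h := c.sum_inner_mul_inner ψ ψ
  have h2 : ∑ i, ⟪ψ, c i⟫_ℂ * ⟪c i, ψ⟫_ℂ = ((∑ i, ‖⟪c i, ψ⟫_ℂ‖ ^ 2 : ℝ) : ℂ) := by
    push_cast
    refine Finset.sum_congr rfl fun i _ => ?_
    rw [← inner_conj_symm (c i) ψ, Complex.mul_conj', RCLike.norm_conj]
  rw [h2, inner_self_eq_norm_sq_to_K, hψ] at h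
  have h3 : ((∑ i, ‖⟪c i, ψ⟫_ℂ‖ ^ 2 : ℝ) : ℂ) = ((1:ℝ) : ℂ) := by rw [h]; norm_num
  have h4 := Complex.ofReal_injective h3
  simpa using h4

/-- power preparation : pointwise square of the `2⁻¹ ^ (n+1)` power is the `2⁻¹ ^ n` power -/
lemma rpow_half_sq {s : ℝ} (hs : 0 ≤ s) (n : ℕ) :
    s ^ ((2:ℝ)⁻¹ ^ (n+1)) * s ^ ((2:ℝ)⁻¹ ^ (n+1)) = s ^ ((2:ℝ)⁻¹ ^ n) := by
  have hx : (0:ℝ) < (2:ℝ)⁻¹ ^ (n+1) := by positivity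
  rw [← Real.rpow_add' hs (by positivity)]
  congr 1
  rw [pow_succ]
  ring

/-- Key monotone-limit lemma: if `diag a s ≤ diag b t` as quadratic forms, with
`s k = ‖⟪a k, ψ⟫‖²`, `t > 0`, `ψ` a unit vector, then
`∑ s log s ≤ ∑ p log t`. -/
lemma key_lemma (a b : OrthonormalBasis (Fin d) ℂ H) (ψ : H) (hψ : ‖ψ‖ = 1)
    (t : Fin d → ℝ) (ht : ∀ l, 0 < t l)
    (hle : ∀ v, (⟪v, diagOp a (fun k => ‖⟪a k, ψ⟫_ℂ‖ ^ 2) v⟫_ℂ).re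
        ≤ (⟪v, diagOp b t v⟫_ℂ).re) :
    ∑ k, ‖⟪a k, ψ⟫_ℂ‖ ^ 2 * Real.log (‖⟪a k, ψ⟫_ℂ‖ ^ 2)
      ≤ ∑ l, ‖⟪b l, ψ⟫_ℂ‖ ^ 2 * Real.log (t l) := by
  set s : Fin d → ℝ := fun k => ‖⟪a k, ψ⟫_ℂ‖ ^ 2 with hs
  set p : Fin d → ℝ := fun l => ‖⟪b l, ψ⟫_ℂ‖ ^ 2 with hp
  have hs0 : ∀ k, 0 ≤ s k := fun k => by positivity
  have hs1 : ∑ k, s k = 1 := parseval a ψ hψ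
  have hp1 : ∑ l, p l = 1 := parseval b ψ hψ
  -- iterated square roots
  set fn : ℕ → Fin d → ℝ := fun n k => (s k) ^ ((2:ℝ)⁻¹ ^ n) with hfn
  set gn : ℕ → Fin d → ℝ := fun n l => (t l) ^ ((2:ℝ)⁻¹ ^ n) with hgn
  have hmain : ∀ n, ∀ v : H,
      (⟪v, diagOp a (fn n) v⟫_ℂ).re ≤ (⟪v, diagOp b (gn n) v⟫_ℂ).re := by
    intro n
    induction n with
    | zero =>
      intro v
      have h1 : fn 0 = s := by
        funext k; simp only [hfn, pow_zero, Real.rpow_one]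
      have h2 : gn 0 = t := by
        funext l; simp only [hgn, pow_zero, Real.rpow_one]
      rw [h1, h2]; exact hle v
    | succ n ih =>
      have hfsq : ∀ v, diagOp a (fn (n+1)) (diagOp a (fn (n+1)) v) = diagOp a (fn n) v := by
        intro v
        have hfe : (fun k => fn (n+1) k * fn (n+1) k) = fn n :=
          funext fun k => rpow_half_sq (hs0 k) n
        rw [diagOp_comp, hfe]
      have hgsq : ∀ v, diagOp b (gn (n+1)) (diagOp b (gn (n+1)) v) = diagOp b (gn n) v := by
        intro v
        have hge : (fun l => gn (n+1) l * gn (n+1) l) = gn n :=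
          funext fun l => rpow_half_sq (ht l).le n
        rw [diagOp_comp, hge]
      refine sqrt_mono (diagOp_symmetric a _) (diagOp_symmetric b _) ?_ ?_ ?_
      · intro v
        rw [re_inner_diagOp_self]
        exact Finset.sum_nonneg fun k _ => mul_nonneg (Real.rpow_nonneg (hs0 k) _) (by positivity)
      · intro v
        rw [re_inner_diagOp_self]
        exact Finset.sum_nonneg fun l _ => mul_nonneg (Real.rpow_nonneg (ht l).le _) (by positivity)
      · intro v
        rw [hfsq, hgsq]
        exact ih v
  -- scalar consequence at ψ
  set F : ℝ → ℝ := fun x => ∑ k, s k * (s k) ^ x with hF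
  set G : ℝ → ℝ := fun x => ∑ l, p l * (t l) ^ x with hG
  have hFG : ∀ n : ℕ, F ((2:ℝ)⁻¹ ^ n) ≤ G ((2:ℝ)⁻¹ ^ n) := by
    intro n
    have h := hmain n ψ
    rw [re_inner_diagOp_self, re_inner_diagOp_self] at h
    have hl : ∑ k, fn n k * ‖⟪a k, ψ⟫_ℂ‖ ^ 2 = F ((2:ℝ)⁻¹ ^ n) := by
      exact Finset.sum_congr rfl fun k _ => by rw [mul_comm]
    have hr : ∑ l, gn n l * ‖⟪b l, ψ⟫_ℂ‖ ^ 2 = G ((2:ℝ)⁻¹ ^ n) := by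
      exact Finset.sum_congr rfl fun l _ => by rw [mul_comm]
    rwa [hl, hr] at h
  have hF0 : F 0 = 1 := by
    simp only [hF, Real.rpow_zero, mul_one]; exact hs1
  have hG0 : G 0 = 1 := by
    simp only [hG, Real.rpow_zero, mul_one]; exact hp1
  have hFd : HasDerivAt F (∑ k, s k * Real.log (s k)) 0 := by
    refine HasDerivAt.fun_sum fun k _ => ?_
    rcases eq_or_lt_of_le (hs0 k) with h0 | h0
    · have hfun : (fun x : ℝ => s k * (s k) ^ x) = fun _ => (0:ℝ) := by
        funext x; rw [← h0, zero_mul]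
      have hval : s k * Real.log (s k) = 0 := by rw [← h0, zero_mul]
      rw [hfun, hval]
      exact hasDerivAt_const 0 0
    · have h := (Real.hasStrictDerivAt_const_rpow h0 0).hasDerivAt
      have h2 := h.const_mul (s k)
      simpa [Real.rpow_zero] using h2
  have hGd : HasDerivAt G (∑ l, p l * Real.log (t l)) 0 := by
    refine HasDerivAt.fun_sum fun l _ => ?_
    have h := (Real.hasStrictDerivAt_const_rpow (ht l) 0).hasDerivAt
    have h2 := h.const_mul (p l)
    simpa [Real.rpow_zero] using h2
  -- sequence (2⁻¹)^n → 0 within {0}ᶜ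
  have hseq : Filter.Tendsto (fun n : ℕ => (2:ℝ)⁻¹ ^ n) Filter.atTop (nhdsWithin 0 {(0:ℝ)}ᶜ) := by
    rw [tendsto_nhdsWithin_iff]
    constructor
    · exact tendsto_pow_atTop_nhds_zero_of_lt_one (by norm_num) (by norm_num)
    · exact Filter.Eventually.of_forall fun n => by
        simp only [Set.mem_compl_iff, Set.mem_singleton_iff]
        positivity
  have hFs : Filter.Tendsto (fun n : ℕ => slope F 0 ((2:ℝ)⁻¹ ^ n)) Filter.atTop
      (nhds (∑ k, s k * Real.log (s k))) :=
    (hasDerivAt_iff_tendsto_slope.mp hFd).comp hseq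
  have hGs : Filter.Tendsto (fun n : ℕ => slope G 0 ((2:ℝ)⁻¹ ^ n)) Filter.atTop
      (nhds (∑ l, p l * Real.log (t l))) :=
    (hasDerivAt_iff_tendsto_slope.mp hGd).comp hseq
  refine le_of_tendsto_of_tendsto' hFs hGs fun n => ?_
  have hx : (0:ℝ) < (2:ℝ)⁻¹ ^ n := by positivity
  simp only [slope_def_field, hF0, hG0, sub_zero]
  have h1 : F ((2:ℝ)⁻¹ ^ n) - 1 ≤ G ((2:ℝ)⁻¹ ^ n) - 1 := by linarith [hFG n]
  exact div_le_div_of_nonneg_right h1 hx.le |>.trans_eq rfl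
set_option linter.unusedSectionVars false in
/-- The ε-regularized operator inequality `σ ≤ (1+ε)·diag_b(1/(d p_l + ε))`,
as a quadratic-form inequality, by Cauchy–Schwarz. -/
lemma claimC (hd : 0 < d) (a b : OrthonormalBasis (Fin d) ℂ H)
    (hmub : ∀ k l, ‖⟪a k, b l⟫_ℂ‖ = 1 / Real.sqrt d)
    (ψ : H) (hψ : ‖ψ‖ = 1) {ε : ℝ} (hε : 0 < ε) (v : H) :
    ∑ k, ‖⟪a k, ψ⟫_ℂ‖ ^ 2 * ‖⟪a k, v⟫_ℂ‖ ^ 2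
      ≤ ∑ l, ((1 + ε) / ((d:ℝ) * ‖⟪b l, ψ⟫_ℂ‖ ^ 2 + ε)) * ‖⟪b l, v⟫_ℂ‖ ^ 2 := by
  have hdR : (0:ℝ) < d := by exact_mod_cast hd
  set p : Fin d → ℝ := fun l => ‖⟪b l, ψ⟫_ℂ‖ ^ 2 with hpdef
  have hp1 : ∑ l, p l = 1 := parseval b ψ hψ
  have hs1 : ∑ k, ‖⟪a k, ψ⟫_ℂ‖ ^ 2 = 1 := parseval a ψ hψ
  set q : Fin d → ℝ := fun l => (d:ℝ) * p l + ε with hqdef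
  have hq : ∀ l, 0 < q l := fun l => by
    have h1 : (0:ℝ) ≤ (d:ℝ) * p l := by positivity
    simp only [hqdef]; linarith
  set G := ∑ l, ‖⟪b l, v⟫_ℂ‖ ^ 2 / q l with hGdef
  have hGnn : 0 ≤ G := Finset.sum_nonneg fun l _ => by positivity
  have step1 : ∀ k, ‖⟪a k, v⟫_ℂ‖ ^ 2 ≤ (1 + ε) * G := by
    intro k
    have hexp : ⟪a k, v⟫_ℂ = ∑ l, ⟪a k, b l⟫_ℂ * ⟪b l, v⟫_ℂ :=
      (b.sum_inner_mul_inner (a k) v).symm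
    have hn : ‖⟪a k, v⟫_ℂ‖ ≤ ∑ l, ‖⟪a k, b l⟫_ℂ‖ * ‖⟪b l, v⟫_ℂ‖ := by
      rw [hexp]
      refine (norm_sum_le _ _).trans_eq ?_
      exact Finset.sum_congr rfl fun l _ => norm_mul _ _
    set f : Fin d → ℝ := fun l => ‖⟪a k, b l⟫_ℂ‖ * Real.sqrt (q l) with hfdef
    set g : Fin d → ℝ := fun l => ‖⟪b l, v⟫_ℂ‖ / Real.sqrt (q l) with hgdef
    have hfg : ∀ l, ‖⟪a k, b l⟫_ℂ‖ * ‖⟪b l, v⟫_ℂ‖ = f l * g l := by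
      intro l
      have hsq : Real.sqrt (q l) ≠ 0 := by positivity
      simp only [hfdef, hgdef]
      field_simp
    have hCS := Finset.sum_mul_sq_le_sq_mul_sq Finset.univ f g
    have hf2 : ∑ l, f l ^ 2 = 1 + ε := by
      have hterm : ∀ l, f l ^ 2 = q l / d := by
        intro l
        simp only [hfdef]
        rw [mul_pow, hmub k l, Real.sq_sqrt (hq l).le, div_pow, one_pow,
          Real.sq_sqrt hdR.le]
        ring
      rw [Finset.sum_congr rfl fun l _ => hterm l, ← Finset.sum_div]
      have hsq : ∑ l, q l = (d:ℝ) * (1 + ε) := by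
        simp only [hqdef]
        rw [Finset.sum_add_distrib, ← Finset.mul_sum, hp1, Finset.sum_const,
          Finset.card_univ, Fintype.card_fin, nsmul_eq_mul]
        ring
      rw [hsq]
      field_simp
    have hg2 : ∑ l, g l ^ 2 = G := by
      refine Finset.sum_congr rfl fun l _ => ?_
      simp only [hgdef]
      rw [div_pow, Real.sq_sqrt (hq l).le]
    have h1 : ‖⟪a k, v⟫_ℂ‖ ^ 2 ≤ (∑ l, f l * g l) ^ 2 := by
      have h2 : (∑ l, ‖⟪a k, b l⟫_ℂ‖ * ‖⟪b l, v⟫_ℂ‖) = ∑ l, f l * g l :=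
        Finset.sum_congr rfl fun l _ => hfg l
      have h3 := hn.trans_eq h2
      exact pow_le_pow_left₀ (norm_nonneg _) h3 2
    calc ‖⟪a k, v⟫_ℂ‖ ^ 2 ≤ (∑ l, f l * g l) ^ 2 := h1
      _ ≤ (∑ l, f l ^ 2) * ∑ l, g l ^ 2 := hCS
      _ = (1 + ε) * G := by rw [hf2, hg2]
  calc ∑ k, ‖⟪a k, ψ⟫_ℂ‖ ^ 2 * ‖⟪a k, v⟫_ℂ‖ ^ 2
      ≤ ∑ k, ‖⟪a k, ψ⟫_ℂ‖ ^ 2 * ((1 + ε) * G) := by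
        refine Finset.sum_le_sum fun k _ => ?_
        exact mul_le_mul_of_nonneg_left (step1 k) (by positivity)
    _ = (1 + ε) * G := by rw [← Finset.sum_mul, hs1, one_mul]
    _ = ∑ l, ((1 + ε) / ((d:ℝ) * ‖⟪b l, ψ⟫_ℂ‖ ^ 2 + ε)) * ‖⟪b l, v⟫_ℂ‖ ^ 2 := by
        rw [hGdef, Finset.mul_sum]
        refine Finset.sum_congr rfl fun l _ => ?_
        have := hq l
        simp only [hqdef, hpdef] at this ⊢
        field_simp
end MU

open MU in
/-- Maassen–Uffink: if `A = {a_k}` and `B = {b_l}` are mutually unbiased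
orthonormal bases of a `d`-dimensional Hilbert space (`|⟨a_k, b_l⟩| = 1/√d`), then for
every unit vector `ψ`, `H(p_A) + H(p_B) ≥ log d`, where `p_A(k) = |⟨a_k, ψ⟩|²` and
`p_B(l) = |⟨b_l, ψ⟩|²` and `H` is the Shannon entropy (natural logarithm, `0·log 0 = 0`). -/
theorem maassen_uffink
    (d : ℕ) (hd : 0 < d) {H : Type*} [NormedAddCommGroup H] [InnerProductSpace ℂ H]
    (a b : OrthonormalBasis (Fin d) ℂ H)
    (hmub : ∀ k l, ‖⟪a k, b l⟫_ℂ‖ = 1 / Real.sqrt d)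
    (ψ : H) (hψ : ‖ψ‖ = 1) :
    Real.log d ≤
      (- ∑ k, ‖⟪a k, ψ⟫_ℂ‖ ^ 2 * Real.log (‖⟪a k, ψ⟫_ℂ‖ ^ 2)) +
      (- ∑ l, ‖⟪b l, ψ⟫_ℂ‖ ^ 2 * Real.log (‖⟪b l, ψ⟫_ℂ‖ ^ 2)) := by
  have : FiniteDimensional ℂ H := Module.Finite.of_basis a.toBasis
  have hdR : (0:ℝ) < d := by exact_mod_cast hd
  set s : Fin d → ℝ := fun k => ‖⟪a k, ψ⟫_ℂ‖ ^ 2 with hsdef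
  set p : Fin d → ℝ := fun l => ‖⟪b l, ψ⟫_ℂ‖ ^ 2 with hpdef
  have hp0 : ∀ l, 0 ≤ p l := fun l => by positivity
  have hp1 : ∑ l, p l = 1 := parseval b ψ hψ
  -- step 1: for every ε > 0, the regularized bound
  have hbound : ∀ ε : ℝ, 0 < ε →
      ∑ k, s k * Real.log (s k)
        ≤ Real.log (1 + ε) - ∑ l, p l * Real.log ((d:ℝ) * p l + ε) := by
    intro ε hε
    have hq : ∀ l, (0:ℝ) < (d:ℝ) * p l + ε := fun l => by
      have : (0:ℝ) ≤ (d:ℝ) * p l := by positivity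
      linarith
    have ht : ∀ l, 0 < (1 + ε) / ((d:ℝ) * p l + ε) := fun l =>
      div_pos (by linarith) (hq l)
    have hkey := key_lemma a b ψ hψ (fun l => (1 + ε) / ((d:ℝ) * p l + ε)) ht ?_
    · refine hkey.trans_eq ?_
      have hterm : ∀ l, p l * Real.log ((1 + ε) / ((d:ℝ) * p l + ε))
          = p l * Real.log (1 + ε) - p l * Real.log ((d:ℝ) * p l + ε) := by
        intro l
        rw [Real.log_div (by linarith) (hq l).ne']
        ring
      rw [Finset.sum_congr rfl fun l _ => hterm l, Finset.sum_sub_distrib,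
        ← Finset.sum_mul, hp1, one_mul]
    · intro v
      rw [re_inner_diagOp_self, re_inner_diagOp_self]
      exact claimC hd a b hmub ψ hψ hε v
  -- step 2: take ε → 0⁺
  have hlim : ∑ k, s k * Real.log (s k) ≤ - ∑ l, p l * Real.log ((d:ℝ) * p l) := by
    have htend : Filter.Tendsto
        (fun ε : ℝ => Real.log (1 + ε) - ∑ l, p l * Real.log ((d:ℝ) * p l + ε))
        (nhdsWithin 0 (Set.Ioi 0))
        (nhds (Real.log (1 + 0) - ∑ l, p l * Real.log ((d:ℝ) * p l + 0))) := by
      refine Filter.Tendsto.mono_left ?_ nhdsWithin_le_nhds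
      refine Filter.Tendsto.sub ?_ ?_
      · exact ((Real.continuousAt_log (by norm_num)).comp
          ((continuous_const.add continuous_id).continuousAt)).tendsto
      · refine tendsto_finset_sum _ fun l _ => ?_
        rcases eq_or_lt_of_le (hp0 l) with h0 | h0
        · have hfun : (fun ε : ℝ => p l * Real.log ((d:ℝ) * p l + ε))
              = fun ε : ℝ => (0:ℝ) * Real.log ((d:ℝ) * p l + ε) := by
            funext ε; rw [← h0]
          rw [hfun]
          simp only [zero_mul]
          rw [← h0]
          simp only [zero_mul]
          exact tendsto_const_nhds
        · have hcont : ContinuousAt (fun ε : ℝ => p l * Real.log ((d:ℝ) * p l + ε)) 0 := by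
            refine ContinuousAt.mul continuousAt_const (ContinuousAt.log ?_ ?_)
            · exact (continuous_const.add continuous_id).continuousAt
            · have h1 : (0:ℝ) < (d:ℝ) * p l := by positivity
              simp only [add_zero]
              exact h1.ne'
          exact hcont.tendsto
    have hev : ∀ᶠ ε in nhdsWithin (0:ℝ) (Set.Ioi 0),
        ∑ k, s k * Real.log (s k)
          ≤ Real.log (1 + ε) - ∑ l, p l * Real.log ((d:ℝ) * p l + ε) :=
      eventually_nhdsWithin_of_forall (s := Set.Ioi (0:ℝ)) (a := (0:ℝ)) fun ε hε => hbound ε hε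
    have := ge_of_tendsto htend hev
    simpa using this
  -- step 3: expand ∑ p log (d p)
  have hexp : ∑ l, p l * Real.log ((d:ℝ) * p l)
      = Real.log d + ∑ l, p l * Real.log (p l) := by
    have hterm : ∀ l, p l * Real.log ((d:ℝ) * p l)
        = p l * Real.log d + p l * Real.log (p l) := by
      intro l
      rcases eq_or_lt_of_le (hp0 l) with h0 | h0
      · rw [← h0]; ring
      · rw [Real.log_mul hdR.ne' h0.ne']; ring
    rw [Finset.sum_congr rfl fun l _ => hterm l, Finset.sum_add_distrib,
      ← Finset.sum_mul, hp1, one_mul]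
  rw [hexp] at hlim
  linarith
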